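/- Let f : ℝ → ℝ be twice differentiable, let a < c and e be real numbers such that f′ is positive on (a, c] and 2^e ≤ f″(x) ≤ 2^{e+1} for all x ∈ [a, c]. Let ζ ∈ (a, c] satisfy f(ζ) = 0 and let z ∈ [ζ, c]. Then the Newton step z′ := z − f(z)/f′(z) satisfies ζ ≤ z′ ≤ z and z′ − ζ ≤ (z − ζ)²/(z − a). -/

import Mathlib

open Set

theorem newton_step_estimate
    (f : ℝ → ℝ) (hf : Differentiable ℝ f) (hf' : Differentiable ℝ (deriv f))
    (a c e : ℝ) (hac : a < c)
    (hpos : ∀ x ∈ Set.Ioc a c, 0 < deriv f x)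
    (hsecond : ∀ x ∈ Set.Icc a c,
      (2 : ℝ) ^ e ≤ deriv (deriv f) x ∧ deriv (deriv f) x ≤ (2 : ℝ) ^ (e + 1))
    (ζ : ℝ) (hζmem : ζ ∈ Set.Ioc a c) (hζ : f ζ = 0)
    (z : ℝ) (hz : z ∈ Set.Icc ζ c)
    (z' : ℝ) (hz' : z' = z - f z / deriv f z) :
    ζ ≤ z' ∧ z' ≤ z ∧ z' - ζ ≤ (z - ζ) ^ 2 / (z - a) := by
  obtain ⟨haζ, hζc⟩ := hζmem
  obtain ⟨hζz, hzc⟩ := hz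
  have haz : a < z := lt_of_lt_of_le haζ hζz
  have hMpos : (0:ℝ) < (2:ℝ)^e := Real.rpow_pos_of_pos (by norm_num) e
  have hM2 : ((2:ℝ)^(e+1)) = 2 * (2:ℝ)^e := by
    rw [Real.rpow_add (by norm_num), Real.rpow_one]; ring
  have hDpos : 0 < deriv f z := hpos z ⟨haz, hzc⟩
  -- f' monotone on [a,c]
  have hmono : MonotoneOn (deriv f) (Icc a c) := by
    apply monotoneOn_of_deriv_nonneg (convex_Icc a c) hf'.continuous.continuousOn
      hf'.differentiableOn
    intro x hx
    rw [interior_Icc] at hx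
    exact le_of_lt (lt_of_lt_of_le hMpos (hsecond x (Ioo_subset_Icc_self hx)).1)
  -- f'(a) ≥ 0
  have hfa : 0 ≤ deriv f a := by
    have ht : Filter.Tendsto (deriv f) (nhdsWithin a (Set.Ioi a)) (nhds (deriv f a)) :=
      hf'.continuous.continuousAt.continuousWithinAt
    refine ge_of_tendsto ht ?_
    filter_upwards [Ioc_mem_nhdsGT_of_mem ⟨le_refl a, hac⟩] with x hx
    exact (hpos x hx).le
  -- E : 2^e (z-a) ≤ D
  have hφd : ∀ x : ℝ, HasDerivAt (fun t : ℝ => deriv f t - (2:ℝ)^e * t)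
      (deriv (deriv f) x - (2:ℝ)^e * 1) x := fun x =>
    (hf' x).hasDerivAt.sub ((hasDerivAt_id x).const_mul _)
  have hE : (2:ℝ)^e * (z - a) ≤ deriv f z := by
    have hφ : MonotoneOn (fun t => deriv f t - (2:ℝ)^e * t) (Icc a c) := by
      apply monotoneOn_of_deriv_nonneg (convex_Icc a c)
        (fun x _ => ((hφd x).differentiableAt.continuousAt).continuousWithinAt)
        (fun x _ => ((hφd x).differentiableAt).differentiableWithinAt)
      intro x hx
      rw [interior_Icc] at hx
      rw [(hφd x).deriv]
      have := (hsecond x (Ioo_subset_Icc_self hx)).1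
      linarith
    have := hφ ⟨le_refl a, hac.le⟩ ⟨haz.le, hzc⟩ haz.le
    simp only at this
    nlinarith
  -- A : 0 ≤ f z
  have hA : 0 ≤ f z := by
    have hfm : MonotoneOn f (Icc ζ z) := by
      apply monotoneOn_of_deriv_nonneg (convex_Icc ζ z) hf.continuous.continuousOn
        hf.differentiableOn
      intro x hx
      rw [interior_Icc] at hx
      exact (hpos x ⟨lt_trans haζ hx.1, le_trans hx.2.le hzc⟩).le
    have := hfm ⟨le_refl ζ, hζz⟩ ⟨hζz, le_refl z⟩ hζz
    rwa [hζ] at this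
  -- B : f z ≤ D (z - ζ)
  have hψd : ∀ x : ℝ, HasDerivAt (fun t : ℝ => deriv f z * t - f t)
      (deriv f z * 1 - deriv f x) x := fun x =>
    ((hasDerivAt_id x).const_mul _).sub (hf x).hasDerivAt
  have hB : f z ≤ deriv f z * (z - ζ) := by
    have hψ : MonotoneOn (fun t => deriv f z * t - f t) (Icc ζ z) := by
      apply monotoneOn_of_deriv_nonneg (convex_Icc ζ z)
        (fun x _ => ((hψd x).differentiableAt.continuousAt).continuousWithinAt)
        (fun x _ => ((hψd x).differentiableAt).differentiableWithinAt)
      intro x hx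
      rw [interior_Icc] at hx
      rw [(hψd x).deriv, mul_one, sub_nonneg]
      exact hmono ⟨(lt_trans haζ hx.1).le, le_trans hx.2.le hzc⟩ ⟨haz.le, hzc⟩ hx.2.le
    have := hψ ⟨le_refl ζ, hζz⟩ ⟨hζz, le_refl z⟩ hζz
    simp only [hζ] at this
    linarith
  -- C : D (z - ζ) - f z ≤ 2^e (z - ζ)^2
  have hhd : ∀ x : ℝ, HasDerivAt (fun t : ℝ => f t - deriv f z * t - (2:ℝ)^e * (t - z)^2)
      (deriv f x - deriv f z * 1 - (2:ℝ)^e * (2 * (x - z))) x := by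
    intro x
    have h1 : HasDerivAt (fun t : ℝ => (t - z)^2) ((2:ℕ) * (x - z)^(1:ℕ) * 1) x :=
      ((hasDerivAt_id x).sub_const z).pow 2
    have h2 : HasDerivAt (fun t : ℝ => (2:ℝ)^e * (t - z)^2)
        ((2:ℝ)^e * (2 * (x - z))) x := by
      have := h1.const_mul ((2:ℝ)^e)
      refine this.congr_deriv ?_
      push_cast
      ring
    exact ((hf x).hasDerivAt.sub ((hasDerivAt_id x).const_mul _)).sub h2
  have hC : deriv f z * (z - ζ) - f z ≤ (2:ℝ)^e * (z - ζ)^2 := by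
    have hh : MonotoneOn (fun t => f t - deriv f z * t - (2:ℝ)^e * (t - z)^2)
        (Icc ζ z) := by
      apply monotoneOn_of_deriv_nonneg (convex_Icc ζ z)
        (fun x _ => ((hhd x).differentiableAt.continuousAt).continuousWithinAt)
        (fun x _ => ((hhd x).differentiableAt).differentiableWithinAt)
      intro x hx
      rw [interior_Icc] at hx
      rw [(hhd x).deriv]
      have hxz : x < z := hx.2
      obtain ⟨η, hη, hηeq⟩ := exists_deriv_eq_slope (deriv f) hxz
        hf'.continuous.continuousOn hf'.differentiableOn
      have hηmem : η ∈ Icc a c := ⟨(lt_trans haζ (lt_trans hx.1 hη.1)).le,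
        le_trans hη.2.le hzc⟩
      have hub := (hsecond η hηmem).2
      rw [hηeq, div_le_iff₀ (by linarith), hM2] at hub
      nlinarith
    have := hh ⟨le_refl ζ, hζz⟩ ⟨hζz, le_refl z⟩ hζz
    simp only [hζ, sub_self] at this
    nlinarith
  -- conclusion
  have hstep1 : ζ ≤ z' := by
    rw [hz', le_sub_iff_add_le, ← le_sub_iff_add_le', div_le_iff₀ hDpos]
    linarith [hB]
  have hstep2 : z' ≤ z := by
    rw [hz']
    have : 0 ≤ f z / deriv f z := div_nonneg hA hDpos.le
    linarith
  refine ⟨hstep1, hstep2, ?_⟩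
  have key : z' - ζ = (deriv f z * (z - ζ) - f z) / deriv f z := by
    rw [hz']; field_simp; ring
  rw [key]
  have hden : (0:ℝ) < (2:ℝ)^e * (z - a) := mul_pos hMpos (by linarith)
  calc (deriv f z * (z - ζ) - f z) / deriv f z
      ≤ ((2:ℝ)^e * (z - ζ)^2) / ((2:ℝ)^e * (z - a)) :=
        div_le_div₀ (by positivity) hC hden hE
    _ = (z - ζ)^2 / (z - a) := mul_div_mul_left _ _ (ne_of_gt hMpos)
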